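/- Let φ : ℝ → ℂ be a characteristic function (continuous, φ(0) = 1) satisfying φ(2t) = φ(t)³ conj(φ(t)) for all t. Then φ(t) ≠ 0 for all t ∈ ℝ. -/

import Mathlib

theorem charFun_funEq_nonvanishing
    (φ : ℝ → ℂ) (hcont : Continuous φ) (h0 : φ 0 = 1)
    (hbd : ∀ t : ℝ, ‖φ t‖ ≤ 1)
    (heq : ∀ t : ℝ, φ (2 * t) = φ t ^ 3 * starRingEnd ℂ (φ t)) :
    ∀ t : ℝ, φ t ≠ 0 := by
  intro t ht
  -- if φ t = 0 then φ (t/2) = 0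
  have key : ∀ s : ℝ, φ s = 0 → φ (s / 2) = 0 := by
    intro s hs
    have h := heq (s / 2)
    rw [show 2 * (s / 2) = s by ring, hs] at h
    rcases mul_eq_zero.mp h.symm with h1 | h1
    · exact pow_eq_zero_iff (by norm_num) |>.mp h1
    · simpa using h1
  have hn : ∀ n : ℕ, φ (t / 2 ^ n) = 0 := by
    intro n
    induction n with
    | zero => simpa using ht
    | succ n ih =>
      have := key _ ih
      rwa [show t / 2 ^ n / 2 = t / 2 ^ (n + 1) by rw [pow_succ]; ring] at this
  have hlim : Filter.Tendsto (fun n : ℕ => t / 2 ^ n) Filter.atTop (nhds 0) := by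
    simpa using Filter.Tendsto.const_div_atTop
      (tendsto_pow_atTop_atTop_of_one_lt (by norm_num : (1:ℝ) < 2)) t
  have := (hcont.tendsto 0).comp hlim
  rw [h0] at this
  rw [show (φ ∘ fun n : ℕ => t / 2 ^ n) = fun _ => (0 : ℂ) from funext fun n => hn n] at this
  have := tendsto_nhds_unique this tendsto_const_nhds
  exact one_ne_zero this
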